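/- In a bicartesian category with zero object hypotheses replaced by fst = snd : O × O → O and inl = inr : I → I + I, if f, g : A → B and either A is isomorphic to O or I, or B is isomorphic to O or I, then f = g. -/

import Mathlib

open CategoryTheory CategoryTheory.Limits

universe v u

/-- In a dicartesian category (binary products and coproducts, terminal object `I`,
initial object `O`, with `fst = snd : O ⨯ O ⟶ O` and `inl = inr : I ⟶ I ⨿ I`), if the
domain or the codomain of two parallel morphisms is isomorphic to `O` or to `I`, then
the morphisms are equal. -/
theorem stmt10 (C : Type u) [Category.{v} C] [HasBinaryProducts C] [HasBinaryCoproducts C]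
    [HasTerminal C] [HasInitial C]
    (hp : (prod.fst : (⊥_ C) ⨯ (⊥_ C) ⟶ ⊥_ C) = prod.snd)
    (hc : (coprod.inl : ⊤_ C ⟶ (⊤_ C) ⨿ (⊤_ C)) = coprod.inr)
    {A B : C} (f g : A ⟶ B)
    (hiso : Nonempty (A ≅ ⊥_ C) ∨ Nonempty (A ≅ ⊤_ C) ∨
            Nonempty (B ≅ ⊥_ C) ∨ Nonempty (B ≅ ⊤_ C)) :
    f = g := by
  rcases hiso with ⟨⟨e⟩⟩ | ⟨⟨e⟩⟩ | ⟨⟨e⟩⟩ | ⟨⟨e⟩⟩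
  · have : e.inv ≫ f = e.inv ≫ g := initial.hom_ext _ _
    calc f = e.hom ≫ e.inv ≫ f := by simp
    _ = e.hom ≫ e.inv ≫ g := by rw [this]
    _ = g := by simp
  · have : e.inv ≫ f = e.inv ≫ g := by
      have h1 : coprod.inl ≫ coprod.desc (e.inv ≫ f) (e.inv ≫ g)
          = coprod.inr ≫ coprod.desc (e.inv ≫ f) (e.inv ≫ g) := by rw [hc]
      rw [coprod.inl_desc, coprod.inr_desc] at h1
      exact h1
    calc f = e.hom ≫ e.inv ≫ f := by simp
    _ = e.hom ≫ e.inv ≫ g := by rw [this]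
    _ = g := by simp
  · have : f ≫ e.hom = g ≫ e.hom := by
      have h1 : prod.lift (f ≫ e.hom) (g ≫ e.hom) ≫ prod.fst
          = prod.lift (f ≫ e.hom) (g ≫ e.hom) ≫ prod.snd := by rw [hp]
      rw [prod.lift_fst, prod.lift_snd] at h1
      exact h1
    calc f = (f ≫ e.hom) ≫ e.inv := by simp
    _ = (g ≫ e.hom) ≫ e.inv := by rw [this]
    _ = g := by simp
  · have : f ≫ e.hom = g ≫ e.hom := terminal.hom_ext _ _
    calc f = (f ≫ e.hom) ≫ e.inv := by simp
    _ = (g ≫ e.hom) ≫ e.inv := by rw [this]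
    _ = g := by simp
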